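/- Let (X,d) be a geodesic metric space of roundness 2, i.e., for every four points x₀₀, x₀₁, x₁₀, x₁₁ ∈ X one has d(x₀₀,x₁₁)² + d(x₀₁,x₁₀)² ≤ d(x₀₀,x₀₁)² + d(x₀₀,x₁₀)² + d(x₁₁,x₀₁)² + d(x₁₁,x₁₀)². Then for any two points A, B ∈ X there is a unique geodesic segment connecting them: any two isometric embeddings γ₁, γ₂ : [0, d(A,B)] → X with γᵢ(0) = A and γᵢ(d(A,B)) = B are equal. -/

import Mathlib

/-- `γ : ℝ → X` is a geodesic segment from `x` to `y`, parametrized by arclength on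
`[0, dist x y]` (i.e. an isometric embedding of `[0, dist x y]` sending `0 ↦ x` and
`dist x y ↦ y`). -/
def IsGeodesicSeg {X : Type*} [MetricSpace X] (x y : X) (γ : ℝ → X) : Prop :=
  γ 0 = x ∧ γ (dist x y) = y ∧
    ∀ s ∈ Set.Icc (0 : ℝ) (dist x y), ∀ t ∈ Set.Icc (0 : ℝ) (dist x y),
      dist (γ s) (γ t) = |s - t|

/-- A metric space is geodesic if every pair of points is joined by a geodesic segment. -/
def IsGeodesicSpace (X : Type*) [MetricSpace X] : Prop :=
  ∀ x y : X, ∃ γ : ℝ → X, IsGeodesicSeg x y γ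

/-- In a geodesic metric space of roundness 2 (i.e. the roundness inequality holds with
exponent 2 for all quadruples of points), any two points are connected by a unique
geodesic segment. -/
theorem unique_geodesic_of_roundness_two (X : Type*) [MetricSpace X]
    (hgeo : IsGeodesicSpace X)
    (hround : ∀ x00 x01 x10 x11 : X,
      dist x00 x11 ^ 2 + dist x01 x10 ^ 2 ≤
        dist x00 x01 ^ 2 + dist x00 x10 ^ 2 + dist x11 x01 ^ 2 + dist x11 x10 ^ 2)
    (A B : X) (γ₁ γ₂ : ℝ → X) (h₁ : IsGeodesicSeg A B γ₁) (h₂ : IsGeodesicSeg A B γ₂) :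
    Set.EqOn γ₁ γ₂ (Set.Icc 0 (dist A B)) := by
  obtain ⟨h10, h11, h1d⟩ := h₁
  obtain ⟨h20, h21, h2d⟩ := h₂
  set d := dist A B with hd
  intro t ht
  simp only [Set.mem_Icc] at ht
  rcases eq_or_lt_of_le (dist_nonneg : (0:ℝ) ≤ d) with hd0 | hd0
  · have h0 : t = 0 := le_antisymm (ht.2.trans hd0.symm.le) ht.1
    rw [h0, h10, h20]
  -- midpoint uniqueness
  have mid : ∀ x y p q : X, dist x p = dist x y / 2 → dist y p = dist x y / 2 →
      dist x q = dist x y / 2 → dist y q = dist x y / 2 → p = q := by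
    intro x y p q hxp hyp hxq hyq
    have h := hround x p q y
    rw [hxp, hxq, hyp, hyq] at h
    have hpq : dist p q = 0 := by nlinarith [dist_nonneg (x := p) (y := q)]
    exact dist_eq_zero.mp hpq
  -- equality on dyadic points
  have key : ∀ n : ℕ, ∀ k : ℕ, k ≤ 2 ^ n → γ₁ (k * d / 2 ^ n) = γ₂ (k * d / 2 ^ n) := by
    intro n
    induction n with
    | zero =>
      intro k hk
      interval_cases k
      · simpa using h10.trans h20.symm
      · simpa using h11.trans h21.symm
    | succ n ih =>
      intro k hk
      rcases Nat.even_or_odd k with ⟨j, hj⟩ | ⟨j, hj⟩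
      · have hj2 : j ≤ 2 ^ n := by omega
        have harg : (k : ℝ) * d / 2 ^ (n+1) = j * d / 2 ^ n := by
          have : (k : ℝ) = 2 * j := by exact_mod_cast (by omega : k = 2 * j)
          rw [this, pow_succ]; ring
        rw [harg]; exact ih j hj2
      · -- k = 2j+1
        have hj2 : j < 2 ^ n := by omega
        set a : ℝ := j * d / 2 ^ n with ha
        set b : ℝ := (j + 1) * d / 2 ^ n with hb
        set m : ℝ := k * d / 2 ^ (n+1) with hm
        have hpow : (0:ℝ) < 2 ^ n := by positivity
        have hba : b - a = d / 2 ^ n := by rw [ha, hb]; ring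
        have hma : m - a = d / 2 ^ n / 2 := by
          rw [hm, ha, pow_succ]
          have : (k : ℝ) = 2 * j + 1 := by exact_mod_cast (by omega : k = 2 * j + 1)
          rw [this]; ring
        have hbm : b - m = d / 2 ^ n / 2 := by
          rw [hm, hb, pow_succ]
          have : (k : ℝ) = 2 * j + 1 := by exact_mod_cast (by omega : k = 2 * j + 1)
          rw [this]; ring
        have hstep : (0:ℝ) ≤ d / 2 ^ n := by positivity
        have haI : a ∈ Set.Icc (0:ℝ) d := by
          constructor
          · rw [ha]; positivity
          · rw [ha, div_le_iff₀ hpow]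
            have : (j : ℝ) ≤ 2 ^ n := by exact_mod_cast hj2.le
            nlinarith
        have hbI : b ∈ Set.Icc (0:ℝ) d := by
          constructor
          · rw [hb]; positivity
          · rw [hb, div_le_iff₀ hpow]
            have : (j : ℝ) + 1 ≤ 2 ^ n := by exact_mod_cast hj2
            nlinarith
        have hmI : m ∈ Set.Icc (0:ℝ) d := by
          constructor
          · have : a ≤ m := by linarith
            linarith [haI.1]
          · have : m ≤ b := by linarith
            linarith [hbI.2]
        have hea : γ₁ a = γ₂ a := ih j hj2.le
        have heb : γ₁ b = γ₂ b := by
          have := ih (j+1) (by omega)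
          rw [hb]
          convert this using 3 <;> push_cast <;> ring
        have hab1 : dist (γ₁ a) (γ₁ b) = d / 2 ^ n := by
          rw [h1d a haI b hbI, abs_of_nonpos (by linarith)]; linarith
        have h1am : dist (γ₁ a) (γ₁ m) = dist (γ₁ a) (γ₁ b) / 2 := by
          rw [hab1, h1d a haI m hmI, abs_of_nonpos (by linarith)]; linarith
        have h1bm : dist (γ₁ b) (γ₁ m) = dist (γ₁ a) (γ₁ b) / 2 := by
          rw [hab1, h1d b hbI m hmI, abs_of_nonneg (by linarith)]; linarith
        have h2am : dist (γ₁ a) (γ₂ m) = dist (γ₁ a) (γ₁ b) / 2 := by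
          rw [hab1, hea, h2d a haI m hmI, abs_of_nonpos (by linarith)]; linarith
        have h2bm : dist (γ₁ b) (γ₂ m) = dist (γ₁ a) (γ₁ b) / 2 := by
          rw [hab1, heb, h2d b hbI m hmI, abs_of_nonneg (by linarith)]; linarith
        exact mid (γ₁ a) (γ₁ b) (γ₁ m) (γ₂ m) h1am h1bm h2am h2bm
  -- approximation
  have bound : ∀ n : ℕ, dist (γ₁ t) (γ₂ t) ≤ 2 * d / 2 ^ n := by
    intro n
    have hpow : (0:ℝ) < 2 ^ n := by positivity
    set k : ℕ := ⌊t * 2 ^ n / d⌋₊ with hk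
    have hnn : 0 ≤ t * 2 ^ n / d := div_nonneg (mul_nonneg ht.1 hpow.le) hd0.le
    have hkle : (k : ℝ) ≤ t * 2 ^ n / d := Nat.floor_le hnn
    have hklt : t * 2 ^ n / d < k + 1 := Nat.lt_floor_add_one _
    have hk2 : (k : ℝ) ≤ 2 ^ n := hkle.trans (by
      rw [div_le_iff₀ hd0]
      nlinarith [ht.2])
    have hk2' : k ≤ 2 ^ n := by exact_mod_cast hk2
    set u : ℝ := k * d / 2 ^ n with hu
    have huI : u ∈ Set.Icc (0:ℝ) d := by
      constructor
      · rw [hu]; positivity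
      · rw [hu, div_le_iff₀ hpow]; nlinarith
    have hu1 : u ≤ t := by
      rw [hu, div_le_iff₀ hpow]
      rw [le_div_iff₀ hd0] at hkle
      linarith
    have hu2 : t ≤ u + d / 2 ^ n := by
      rw [div_lt_iff₀ hd0] at hklt
      rw [hu]
      rw [← add_div, le_div_iff₀ hpow]
      nlinarith
    have htI : t ∈ Set.Icc (0:ℝ) d := ht
    have heq := key n k hk2'
    calc dist (γ₁ t) (γ₂ t) ≤ dist (γ₁ t) (γ₁ u) + dist (γ₁ u) (γ₂ t) := dist_triangle _ _ _
      _ = dist (γ₁ t) (γ₁ u) + dist (γ₂ u) (γ₂ t) := by rw [heq]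
      _ = |t - u| + |u - t| := by rw [h1d t htI u huI, h2d u huI t htI]
      _ ≤ 2 * d / 2 ^ n := by
          rw [abs_of_nonneg (by linarith), abs_of_nonpos (by linarith)]
          have : 2 * d / 2 ^ n = 2 * (d / 2 ^ n) := by ring
          linarith
  by_contra hne
  have hpos : 0 < dist (γ₁ t) (γ₂ t) := dist_pos.mpr hne
  obtain ⟨n, hn⟩ := exists_pow_lt_of_lt_one
    (div_pos hpos (by linarith : (0:ℝ) < 2 * d)) (by norm_num : (1/2 : ℝ) < 1)
  have hb := bound n
  have h2n : (0:ℝ) < 2 ^ n := by positivity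
  have hrw : ((1:ℝ)/2) ^ n = 1 / 2 ^ n := by rw [div_pow, one_pow]
  rw [hrw, div_lt_div_iff₀ h2n (by linarith : (0:ℝ) < 2 * d)] at hn
  rw [le_div_iff₀ h2n] at hb
  linarith
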